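/- The map Φ : G₂ → Aut_I(G₂') sending g̃ to Φ_{g̃} is a group isomorphism; in particular Aut_I(G₂') ≅ G₂. -/

import Mathlib

universe u

section GoursatSetup

variable {G₁ G₂ : Type u} [Group G₁] [Group G₂]

/-- `π₁(H)`, the projection of `H` to the first factor. -/
def projFst (H : Subgroup (G₁ × G₂)) : Subgroup G₁ := H.map (MonoidHom.fst G₁ G₂)

/-- `π₂(H)`, the projection of `H` to the second factor. -/
def projSnd (H : Subgroup (G₁ × G₂)) : Subgroup G₂ := H.map (MonoidHom.snd G₁ G₂)

/-- `ι₁⁻¹(H) = {g ∈ G₁ | (g, e) ∈ H}`. -/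
def kerFst (H : Subgroup (G₁ × G₂)) : Subgroup G₁ := H.comap (MonoidHom.inl G₁ G₂)

/-- `ι₂⁻¹(H) = {g ∈ G₂ | (e, g) ∈ H}`. -/
def kerSnd (H : Subgroup (G₁ × G₂)) : Subgroup G₂ := H.comap (MonoidHom.inr G₁ G₂)

theorem kerFst_le_projFst (H : Subgroup (G₁ × G₂)) : kerFst H ≤ projFst H :=
  fun g hg => ⟨(g, 1), hg, rfl⟩

theorem kerSnd_le_projSnd (H : Subgroup (G₁ × G₂)) : kerSnd H ≤ projSnd H :=
  fun g hg => ⟨(1, g), hg, rfl⟩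

/-- `ι₁⁻¹(H)` is a normal subgroup of `π₁(H)`. -/
instance kerFst_normal (H : Subgroup (G₁ × G₂)) :
    ((kerFst H).subgroupOf (projFst H)).Normal := by
  constructor
  intro n hn g
  rw [Subgroup.mem_subgroupOf] at hn ⊢
  obtain ⟨x, hxH, hx⟩ := g.2
  have key : x * (((n : G₁), 1) : G₁ × G₂) * x⁻¹ ∈ H :=
    mul_mem (mul_mem hxH hn) (inv_mem hxH)
  have : x * (((n : G₁), 1) : G₁ × G₂) * x⁻¹ = (((g * n * g⁻¹ : projFst H) : G₁), 1) := by
    ext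
    · simp [← hx]
    · simp
  rwa [this] at key

/-- `ι₂⁻¹(H)` is a normal subgroup of `π₂(H)`. -/
instance kerSnd_normal (H : Subgroup (G₁ × G₂)) :
    ((kerSnd H).subgroupOf (projSnd H)).Normal := by
  constructor
  intro n hn g
  rw [Subgroup.mem_subgroupOf] at hn ⊢
  obtain ⟨x, hxH, hx⟩ := g.2
  have key : x * ((1, (n : G₂)) : G₁ × G₂) * x⁻¹ ∈ H :=
    mul_mem (mul_mem hxH hn) (inv_mem hxH)
  have : x * ((1, (n : G₂)) : G₁ × G₂) * x⁻¹ = (1, ((g * n * g⁻¹ : projSnd H) : G₂)) := by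
    ext
    · simp
    · simp [← hx]
  rwa [this] at key

/-- The quotient `V₁ = π₁(H)/ι₁⁻¹(H)`. -/
abbrev QuotFst (H : Subgroup (G₁ × G₂)) := projFst H ⧸ (kerFst H).subgroupOf (projFst H)

/-- The quotient `π₂(H)/ι₂⁻¹(H)`. -/
abbrev QuotSnd (H : Subgroup (G₁ × G₂)) := projSnd H ⧸ (kerSnd H).subgroupOf (projSnd H)

/-- The vertex set of the auxiliary system `G_{ι₁}` : it is `V₁` if `π₁(H) = G₁`
(the extra summand is then empty) and `V₁ ⊔ {s}` otherwise. -/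
abbrev AuxVert (H : Subgroup (G₁ × G₂)) := QuotFst H ⊕ PLift (projFst H ≠ ⊤)

/-- The auxiliary binary relational system `G_{ι₁}` over the label set
`I₁ = I_{ι₁} ⊔ (J₁ \ {0})`. -/
def auxRel (H : Subgroup (G₁ × G₂)) {Iι J₁ : Type u} (j₁0 : J₁) (r : J₁ → G₁) :
    (Iι ⊕ {j : J₁ // j ≠ j₁0}) → AuxVert H → AuxVert H → Prop
  | _,      .inr _, .inr _ => True
  | .inl _, .inl a, .inl b => b = a
  | .inr j, .inl a, .inl b =>
      ∃ h : r j.val ∈ projFst H, b = QuotientGroup.mk ⟨r j.val, h⟩ * a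
  | .inl _, .inl _, .inr _ => False
  | .inl _, .inr _, .inl _ => False
  | .inr j, .inl _, .inr _ => r j.val ∉ projFst H
  | .inr j, .inr _, .inl _ => r j.val ∉ projFst H

/-- The generating family `R = (r_i)_{i ∈ I₁}` of `G₁`. -/
def cayGenFst (H : Subgroup (G₁ × G₂)) {Iι J₁ : Type u} (rι : Iι → kerFst H) (j₁0 : J₁)
    (r : J₁ → G₁) : (Iι ⊕ {j : J₁ // j ≠ j₁0}) → G₁
  | .inl i => (rι i : G₁)
  | .inr j => r j.val

/-- The Cayley diagram `Cay(G₁, R)` as an `I₁`-system. -/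
def cayRelFst (H : Subgroup (G₁ × G₂)) {Iι J₁ : Type u} (rι : Iι → kerFst H) (j₁0 : J₁)
    (r : J₁ → G₁) (i : Iι ⊕ {j : J₁ // j ≠ j₁0}) (g g' : G₁) : Prop :=
  g' = cayGenFst H rι j₁0 r i * g

/-- The map `φ₀ : G₁ → V(G_{ι₁})`, sending `g` to `[g]` if `g ∈ π₁(H)` and to `s`
otherwise. -/
noncomputable def phiZero (H : Subgroup (G₁ × G₂)) (g : G₁) : AuxVert H :=
  letI := Classical.dec (g ∈ projFst H)
  if h : g ∈ projFst H then .inl (QuotientGroup.mk ⟨g, h⟩)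
  else .inr ⟨fun hP => h (by rw [hP]; exact Subgroup.mem_top g)⟩

end GoursatSetup

section MainSystem

variable {G₁ G₂ : Type u} [Group G₁] [Group G₂]

/-- The vertex set of the system `G₂'`: `G₂ ⊔ (⊔_{j ∈ J₂} V₂ʲ)` with
`V₂ʲ = {j} × V(G_{ι₁})`. -/
abbrev MainVert (H : Subgroup (G₁ × G₂)) (J₂ : Type u) := G₂ ⊕ (J₂ × AuxVert H)

/-- The full label set `I = I₁ ⊔ I₂ ⊔ {θ}`. -/
abbrev FullLabel (Iι J₁ Iπ J₂ : Type u) (j₁0 : J₁) (j₂0 : J₂) :=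
  (Iι ⊕ {j : J₁ // j ≠ j₁0}) ⊕ ((Iπ ⊕ {j : J₂ // j ≠ j₂0}) ⊕ PUnit.{u + 1})

/-- The generating family `S = (s_i)_{i ∈ I₂}` of `G₂`. -/
def cayGenSnd (H : Subgroup (G₁ × G₂)) {Iπ J₂ : Type u} (sπ : Iπ → projSnd H) (j₂0 : J₂)
    (s : J₂ → G₂) : (Iπ ⊕ {j : J₂ // j ≠ j₂0}) → G₂
  | .inl i => (sπ i : G₂)
  | .inr j => s j.val

/-- The binary relational system `G₂'` over the label set `I = I₁ ⊔ I₂ ⊔ {θ}`. -/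
def mainRel (H : Subgroup (G₁ × G₂)) {Iι J₁ Iπ J₂ : Type u} (j₁0 : J₁) (r : J₁ → G₁)
    (sπ : Iπ → projSnd H) (j₂0 : J₂) (s : J₂ → G₂)
    (k₂ : G₂ → projSnd H) (jj₂ : G₂ → J₂) (θ : QuotFst H ≃* QuotSnd H) :
    FullLabel Iι J₁ Iπ J₂ j₁0 j₂0 → MainVert H J₂ → MainVert H J₂ → Prop
  | .inl i₁, .inr (j, v), .inr (j', v') => j' = j ∧ auxRel H j₁0 r i₁ v v'
  | .inr (.inl i₂), .inl g, .inl g' => g' = cayGenSnd H sπ j₂0 s i₂ * g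
  | .inr (.inr _), .inl g, .inr (j, v) =>
      j = jj₂ g ∧ v = .inl (θ.symm (QuotientGroup.mk (k₂ g)))
  | _, _, _ => False

/-- The self-map `Φ_{g̃}` of the vertex set of `G₂'` induced by `g̃ ∈ G₂`. -/
def mainPhi (H : Subgroup (G₁ × G₂)) {J₂ : Type u} (s : J₂ → G₂)
    (k₂ : G₂ → projSnd H) (jj₂ : G₂ → J₂) (θ : QuotFst H ≃* QuotSnd H)
    (gt : G₂) : MainVert H J₂ → MainVert H J₂
  | .inl g => .inl (g * gt⁻¹)
  | .inr (j, .inl a) =>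
      .inr (jj₂ (s j * gt⁻¹),
        .inl (a * θ.symm (QuotientGroup.mk (k₂ (s j * gt⁻¹)))))
  | .inr (j, .inr u) => .inr (jj₂ (s j * gt⁻¹), .inr u)

/-- The Cayley diagram `Cay(G₁, R)` viewed as an `I`-system over the full label set,
with no edges of label outside `I₁`. -/
def cayRelFull (H : Subgroup (G₁ × G₂)) {Iι J₁ Iπ J₂ : Type u} (rι : Iι → kerFst H)
    (j₁0 : J₁) (r : J₁ → G₁) (j₂0 : J₂) :
    FullLabel Iι J₁ Iπ J₂ j₁0 j₂0 → G₁ → G₁ → Prop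
  | .inl i₁ => fun g g' => g' = cayGenFst H rι j₁0 r i₁ * g
  | .inr _ => fun _ _ => False

/-- The morphism `φ' : Cay(G₁, R) → G₂'`, `φ'(g) = (0, φ₀(g))`. -/
noncomputable def mainArrow (H : Subgroup (G₁ × G₂)) {J₂ : Type u} (j₂0 : J₂) (g : G₁) :
    MainVert H J₂ :=
  .inr (j₂0, phiZero H g)

end MainSystem

/-- The automorphism group of a binary relational system `R` over a label set `I`,
as a subgroup of the permutations of the vertex set. -/
def relAut {I V : Type*} (R : I → V → V → Prop) : Subgroup (Equiv.Perm V) where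
  carrier := {e | ∀ i v w, R i v w ↔ R i (e v) (e w)}
  one_mem' := by intro i v w; simp
  mul_mem' := by
    intro a b ha hb i v w
    simpa [Equiv.Perm.mul_apply] using (hb i v w).trans (ha i (b v) (b w))
  inv_mem' := by
    intro a ha i v w
    simpa [Equiv.Perm.coe_inv, Equiv.apply_symm_apply] using (ha i (a⁻¹ v) (a⁻¹ w)).symm

section ProofAux

variable {G₁ G₂ : Type u} [Group G₁] [Group G₂] {H : Subgroup (G₁ × G₂)}
  {Iι J₁ Iπ J₂ : Type u} {rι : Iι → kerFst H} {j₁0 : J₁} {r : J₁ → G₁}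
  {sπ : Iπ → projSnd H} {j₂0 : J₂} {s : J₂ → G₂}
  {k₂ : G₂ → projSnd H} {jj₂ : G₂ → J₂} {θ : QuotFst H ≃* QuotSnd H}

lemma cocycleAux
    (hdec : ∀ g : G₂, (k₂ g : G₂) * s (jj₂ g) = g)
    (huniq : ∀ (g : G₂) (κ : projSnd H) (l : J₂), (κ : G₂) * s l = g → κ = k₂ g ∧ l = jj₂ g)
    (a b : G₂) :
    k₂ (a * b) = k₂ a * k₂ (s (jj₂ a) * b) ∧ jj₂ (a * b) = jj₂ (s (jj₂ a) * b) := by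
  have h := huniq (a * b) (k₂ a * k₂ (s (jj₂ a) * b)) (jj₂ (s (jj₂ a) * b)) ?_
  · exact ⟨h.1.symm, h.2.symm⟩
  · push_cast
    rw [mul_assoc, hdec (s (jj₂ a) * b), ← mul_assoc, hdec a]

lemma kjj_s
    (huniq : ∀ (g : G₂) (κ : projSnd H) (l : J₂), (κ : G₂) * s l = g → κ = k₂ g ∧ l = jj₂ g)
    (j : J₂) : k₂ (s j) = 1 ∧ jj₂ (s j) = j := by
  have h := huniq (s j) 1 j (by simp)
  exact ⟨h.1.symm, h.2.symm⟩

lemma mainPhi_one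
    (huniq : ∀ (g : G₂) (κ : projSnd H) (l : J₂), (κ : G₂) * s l = g → κ = k₂ g ∧ l = jj₂ g)
    (v : MainVert H J₂) : mainPhi H s k₂ jj₂ θ 1 v = v := by
  obtain (g | ⟨j, (a | u)⟩) := v
  · simp [mainPhi]
  · simp [mainPhi, (kjj_s huniq j).1, (kjj_s huniq j).2]
  · simp [mainPhi, (kjj_s huniq j).2]

lemma mainPhi_mul
    (hdec : ∀ g : G₂, (k₂ g : G₂) * s (jj₂ g) = g)
    (huniq : ∀ (g : G₂) (κ : projSnd H) (l : J₂), (κ : G₂) * s l = g → κ = k₂ g ∧ l = jj₂ g)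
    (a b : G₂) (v : MainVert H J₂) :
    mainPhi H s k₂ jj₂ θ (a * b) v = mainPhi H s k₂ jj₂ θ a (mainPhi H s k₂ jj₂ θ b v) := by
  obtain (g | ⟨j, (x | u)⟩) := v
  · simp [mainPhi, mul_assoc]
  · have hc := cocycleAux hdec huniq (s j * b⁻¹) a⁻¹
    simp only [mainPhi, mul_inv_rev]
    rw [← mul_assoc (s j) b⁻¹ a⁻¹]
    exact congrArg Sum.inr (Prod.ext hc.2
      (congrArg Sum.inl (by push_cast [hc.1]; rw [QuotientGroup.mk_mul, map_mul, mul_assoc])))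
  · have hc := cocycleAux hdec huniq (s j * b⁻¹) a⁻¹
    simp only [mainPhi, mul_inv_rev]
    rw [← mul_assoc (s j) b⁻¹ a⁻¹, hc.2]

lemma mainPhi_mono
    (hdec : ∀ g : G₂, (k₂ g : G₂) * s (jj₂ g) = g)
    (huniq : ∀ (g : G₂) (κ : projSnd H) (l : J₂), (κ : G₂) * s l = g → κ = k₂ g ∧ l = jj₂ g)
    (gt : G₂) (i : FullLabel Iι J₁ Iπ J₂ j₁0 j₂0) (v w : MainVert H J₂)
    (h : mainRel H j₁0 r sπ j₂0 s k₂ jj₂ θ i v w) :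
    mainRel H j₁0 r sπ j₂0 s k₂ jj₂ θ i (mainPhi H s k₂ jj₂ θ gt v)
      (mainPhi H s k₂ jj₂ θ gt w) := by
  obtain (i₁ | (i₂ | u)) := i
  · obtain (g | ⟨j, x⟩) := v
    · obtain (g' | ⟨j', x'⟩) := w <;> exact h.elim
    · obtain (g' | ⟨j', x'⟩) := w
      · exact h.elim
      · obtain ⟨rfl, hx⟩ := h
        obtain (a | u₁) := x <;> obtain (b | u₂) := x'
        · obtain (iι | jl) := i₁
          · exact ⟨rfl, show b * _ = a * _ by rw [show b = a from hx]⟩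
          · obtain ⟨hm, rfl⟩ := hx
            exact ⟨rfl, hm, mul_assoc _ _ _⟩
        · obtain (iι | jl) := i₁
          · exact hx.elim
          · exact ⟨rfl, hx⟩
        · obtain (iι | jl) := i₁
          · exact hx.elim
          · exact ⟨rfl, hx⟩
        · obtain (iι | jl) := i₁ <;> exact ⟨rfl, trivial⟩
  · obtain (g | ⟨j, x⟩) := v
    · obtain (g' | ⟨j', x'⟩) := w
      · have hg : g' = cayGenSnd H sπ j₂0 s i₂ * g := h
        show g' * gt⁻¹ = cayGenSnd H sπ j₂0 s i₂ * (g * gt⁻¹)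
        rw [hg, mul_assoc]
      · exact h.elim
    · obtain (g' | ⟨j', x'⟩) := w <;> exact h.elim
  · obtain (g | ⟨j, x⟩) := v
    · obtain (g' | ⟨j', x'⟩) := w
      · exact h.elim
      · obtain ⟨rfl, rfl⟩ := h
        have hc := cocycleAux hdec huniq g gt⁻¹
        refine ⟨hc.2.symm, ?_⟩
        refine congrArg Sum.inl ?_ |>.symm
        rw [hc.1, QuotientGroup.mk_mul, map_mul]
    · obtain (g' | ⟨j', x'⟩) := w <;> exact h.elim

lemma mainPhi_rel_iff
    (hdec : ∀ g : G₂, (k₂ g : G₂) * s (jj₂ g) = g)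
    (huniq : ∀ (g : G₂) (κ : projSnd H) (l : J₂), (κ : G₂) * s l = g → κ = k₂ g ∧ l = jj₂ g)
    (gt : G₂) (i : FullLabel Iι J₁ Iπ J₂ j₁0 j₂0) (v w : MainVert H J₂) :
    mainRel H j₁0 r sπ j₂0 s k₂ jj₂ θ i v w ↔
      mainRel H j₁0 r sπ j₂0 s k₂ jj₂ θ i (mainPhi H s k₂ jj₂ θ gt v)
        (mainPhi H s k₂ jj₂ θ gt w) := by
  constructor
  · exact mainPhi_mono hdec huniq gt i v w
  · intro h
    have h2 := mainPhi_mono hdec huniq gt⁻¹ i _ _ h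
    rwa [← mainPhi_mul hdec huniq, ← mainPhi_mul hdec huniq, inv_mul_cancel,
      mainPhi_one huniq, mainPhi_one huniq] at h2

end ProofAux

/-- The map `Φ : G₂ → Aut_I(G₂')`, `g̃ ↦ Φ_{g̃}`, is a group isomorphism; in particular
`Aut_I(G₂') ≅ G₂`. -/
theorem mainPhi_group_isomorphism {G₁ G₂ : Type u} [Group G₁] [Group G₂]
    (H : Subgroup (G₁ × G₂)) {Iι J₁ Iπ J₂ : Type u}
    (rι : Iι → kerFst H) (j₁0 : J₁) (r : J₁ → G₁)
    (sπ : Iπ → projSnd H) (j₂0 : J₂) (s : J₂ → G₂)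
    (k₂ : G₂ → projSnd H) (jj₂ : G₂ → J₂) (θ : QuotFst H ≃* QuotSnd H)
    (hr0 : r j₁0 = 1)
    (hcos : ∀ g : G₁, ∃! j : J₁, g * (r j)⁻¹ ∈ kerFst H)
    (hKgen : Subgroup.closure (Set.range fun i => ((rι i : G₁))) = kerFst H)
    (hs0 : s j₂0 = 1)
    (hPgen : Subgroup.closure (Set.range fun i => ((sπ i : G₂))) = projSnd H)
    (hdec : ∀ g : G₂, (k₂ g : G₂) * s (jj₂ g) = g)
    (huniq : ∀ (g : G₂) (κ : projSnd H) (l : J₂), (κ : G₂) * s l = g → κ = k₂ g ∧ l = jj₂ g)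
    (hθ : ∀ (x : projFst H) (y : projSnd H),
      θ (QuotientGroup.mk x) = QuotientGroup.mk y ↔ ((x : G₁), (y : G₂)) ∈ H)
 :
    ∃ Φ : G₂ ≃* relAut (mainRel H (Iι := Iι) j₁0 r sπ j₂0 s k₂ jj₂ θ),
      ∀ gt : G₂, ⇑((Φ gt : relAut (mainRel H (Iι := Iι) j₁0 r sπ j₂0 s k₂ jj₂ θ)) :
        Equiv.Perm (MainVert H J₂)) = mainPhi H s k₂ jj₂ θ gt := by

  classical
  have he'generic : True := trivial
  have hone := mainPhi_one (H := H) (s := s) (k₂ := k₂) (jj₂ := jj₂) (θ := θ) huniq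
  have hmul := mainPhi_mul (H := H) (s := s) (k₂ := k₂) (jj₂ := jj₂) (θ := θ) hdec huniq
  set R := mainRel H (Iι := Iι) j₁0 r sπ j₂0 s k₂ jj₂ θ with hRdef
  let P : G₂ → Equiv.Perm (MainVert H J₂) := fun gt =>
    { toFun := mainPhi H s k₂ jj₂ θ gt
      invFun := mainPhi H s k₂ jj₂ θ gt⁻¹
      left_inv := fun v => by rw [← hmul, inv_mul_cancel, hone]
      right_inv := fun v => by rw [← hmul, mul_inv_cancel, hone] }
  have hPmem : ∀ gt, P gt ∈ relAut R := fun gt i v w =>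
    mainPhi_rel_iff hdec huniq gt i v w
  let Φh : G₂ →* relAut R :=
    { toFun := fun gt => ⟨P gt, hPmem gt⟩
      map_one' := Subtype.ext (Equiv.ext fun v => hone v)
      map_mul' := fun a b => Subtype.ext (Equiv.ext fun v => hmul a b v) }
  have hinj : Function.Injective Φh := by
    intro a b hab
    have h1 : P a = P b := congrArg Subtype.val hab
    have h2 : Sum.inl (1 * a⁻¹) = (Sum.inl (1 * b⁻¹) : MainVert H J₂) :=
      congrArg (fun f : Equiv.Perm (MainVert H J₂) => f (Sum.inl 1)) h1
    have h3 : (1 : G₂) * a⁻¹ = 1 * b⁻¹ := by injection h2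
    rw [one_mul, one_mul] at h3
    exact inv_injective h3
  have hsurj : Function.Surjective Φh := by
    rintro ⟨e, he⟩
    have he' : ∀ i v w, R i v w ↔ R i (e v) (e w) := he
    -- e maps G₂-vertices to G₂-vertices
    have hinlE : ∀ g : G₂, ∃ g', e (Sum.inl g) = Sum.inl g' := by
      intro g
      have hedge : R (Sum.inr (Sum.inr PUnit.unit)) (Sum.inl g)
          (Sum.inr (jj₂ g, Sum.inl (θ.symm (QuotientGroup.mk (k₂ g))))) := ⟨rfl, rfl⟩
      have h2 := (he' _ _ _).mp hedge
      cases hfg : e (Sum.inl g) with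
      | inl g' => exact ⟨g', rfl⟩
      | inr p =>
        obtain ⟨jp, xp⟩ := p
        rw [hfg] at h2
        revert h2
        generalize e (Sum.inr (jj₂ g, Sum.inl (θ.symm (QuotientGroup.mk (k₂ g))))) = z
        rintro h2
        obtain (z' | ⟨jz, xz⟩) := z <;> exact h2.elim
    choose ψ hψ using hinlE
    have hequiv : ∀ (i₂ : Iπ ⊕ {j : J₂ // j ≠ j₂0}) (g : G₂),
        ψ (cayGenSnd H sπ j₂0 s i₂ * g) = cayGenSnd H sπ j₂0 s i₂ * ψ g := by
      intro i₂ g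
      have hedge : R (Sum.inr (Sum.inl i₂)) (Sum.inl g)
          (Sum.inl (cayGenSnd H sπ j₂0 s i₂ * g)) := rfl
      have h2 := (he' _ _ _).mp hedge
      rw [hψ g, hψ (cayGenSnd H sπ j₂0 s i₂ * g)] at h2
      exact h2
    let T : Subgroup G₂ :=
      { carrier := {c | ∀ g, ψ (c * g) = c * ψ g}
        one_mem' := fun g => by rw [one_mul, one_mul]
        mul_mem' := fun {a b} ha hb g => by rw [mul_assoc, ha, hb, mul_assoc]
        inv_mem' := fun {a} ha g => by
          have h := ha (a⁻¹ * g)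
          rw [mul_inv_cancel_left] at h
          rw [h, inv_mul_cancel_left] }
    have hsub : Set.range (cayGenSnd H sπ j₂0 s) ⊆ T := by
      rintro x ⟨i₂, rfl⟩
      exact fun g => hequiv i₂ g
    have htop : ∀ c : G₂, c ∈ T := by
      have hle : Subgroup.closure (Set.range (cayGenSnd H sπ j₂0 s)) ≤ T :=
        (Subgroup.closure_le T).2 hsub
      intro c
      apply hle
      have h1 : (k₂ c : G₂) ∈ Subgroup.closure (Set.range (cayGenSnd H sπ j₂0 s)) := by
        have hs : (k₂ c : G₂) ∈ Subgroup.closure (Set.range fun i => ((sπ i : G₂))) := by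
          rw [hPgen]; exact (k₂ c).2
        refine Subgroup.closure_mono ?_ hs
        rintro x ⟨i, rfl⟩
        exact ⟨Sum.inl i, rfl⟩
      have h2 : s (jj₂ c) ∈ Subgroup.closure (Set.range (cayGenSnd H sπ j₂0 s)) := by
        by_cases hj : jj₂ c = j₂0
        · rw [hj, hs0]; exact one_mem _
        · exact Subgroup.subset_closure ⟨Sum.inr ⟨jj₂ c, hj⟩, rfl⟩
      rw [← hdec c]
      exact mul_mem h1 h2
    set gt := (ψ 1)⁻¹ with hgt
    have hψg : ∀ g, ψ g = g * gt⁻¹ := by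
      intro g
      have h := htop g 1
      rw [mul_one] at h
      rw [h, hgt, inv_inv]
    have hEinl : ∀ g, e (Sum.inl g) = Sum.inl (g * gt⁻¹) := fun g => by
      rw [hψ g, hψg g]
    have hEq : ∀ (j : J₂) (q : QuotFst H),
        e (Sum.inr (j, Sum.inl q)) = Sum.inr (jj₂ (s j * gt⁻¹),
          Sum.inl (q * θ.symm (QuotientGroup.mk (k₂ (s j * gt⁻¹))))) := by
      intro j q
      obtain ⟨y, hy⟩ := QuotientGroup.mk_surjective (θ q)
      obtain ⟨hky, hjy⟩ := huniq ((y : G₂) * s j) y j rfl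
      have hqe : θ.symm (QuotientGroup.mk (k₂ ((y : G₂) * s j))) = q := by
        rw [← hky, hy, MulEquiv.symm_apply_apply]
      have hedge : R (Sum.inr (Sum.inr PUnit.unit)) (Sum.inl ((y : G₂) * s j))
          (Sum.inr (j, Sum.inl q)) := ⟨hjy, congrArg Sum.inl hqe.symm⟩
      have h2 := (he' _ _ _).mp hedge
      rw [hEinl ((y : G₂) * s j)] at h2
      revert h2
      generalize hEv : e (Sum.inr (j, Sum.inl q)) = z
      rintro h2
      obtain (z' | ⟨jz, xz⟩) := z
      · exact h2.elim
      · obtain ⟨rfl, rfl⟩ := h2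
        have hc := cocycleAux hdec huniq ((y : G₂) * s j) gt⁻¹
        refine congrArg Sum.inr (Prod.ext ?_ (congrArg Sum.inl ?_))
        · rw [hc.2, ← hjy]
        · rw [hc.1, QuotientGroup.mk_mul, map_mul, hqe, ← hjy]
    have hEu : ∀ (j : J₂) (u : PLift (projFst H ≠ ⊤)),
        e (Sum.inr (j, Sum.inr u)) = Sum.inr (jj₂ (s j * gt⁻¹), Sum.inr u) := by
      intro j u
      obtain ⟨g₀, hg₀⟩ : ∃ g₀ : G₁, g₀ ∉ projFst H := by
        by_contra hc
        push_neg at hc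
        exact u.down ((Subgroup.eq_top_iff' _).2 hc)
      obtain ⟨jstar, hjk, _⟩ := hcos g₀
      have hrn : r jstar ∉ projFst H := by
        intro hmem
        have h := mul_mem (kerFst_le_projFst H hjk) hmem
        rw [inv_mul_cancel_right] at h
        exact hg₀ h
      have hj0 : jstar ≠ j₁0 := fun hh => hrn (by rw [hh, hr0]; exact one_mem _)
      have hedge : R (Sum.inl (Sum.inr ⟨jstar, hj0⟩))
          (Sum.inr (j, Sum.inl (1 : QuotFst H))) (Sum.inr (j, Sum.inr u)) := ⟨rfl, hrn⟩
      have h2 := (he' _ _ _).mp hedge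
      rw [hEq j 1] at h2
      revert h2
      generalize e (Sum.inr (j, Sum.inr u)) = z
      rintro h2
      obtain (z' | ⟨jz, xz⟩) := z
      · exact h2.elim
      · obtain ⟨rfl, h3⟩ := h2
        obtain (b | u') := xz
        · exact absurd h3.1 hrn
        · rw [Subsingleton.elim u' u]
    refine ⟨gt, Subtype.ext (Equiv.ext fun v => ?_)⟩
    obtain (g | ⟨j, (q | u)⟩) := v
    · rw [hEinl g]; rfl
    · rw [hEq j q]; rfl
    · rw [hEu j u]; rfl
  exact ⟨MulEquiv.ofBijective Φh ⟨hinj, hsurj⟩, fun gt => rfl⟩
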